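/- Let A be a smooth vector field on ℝ⁴ with (□ + m²)A_μ = 0, m > 0, F_{μν} := ∂_μ A_ν − ∂_ν A_μ, and A^phys_μ := A_μ + (1/m²) ∂_μ ∂^ν A_ν. Define the energy-momentum tensor 𝒯_{μν} := F_{μρ} F_ν{}^ρ − (1/4) η_{μν} F_{ρσ} F^{ρσ} − m² A^phys_μ A^phys_ν + (m²/2) η_{μν} A^{phys,ρ} A^phys_ρ. Then 𝒯 is conserved: ∂^ν 𝒯_{μν} = 0. -/

import Mathlib

/-- Partial derivative in direction μ of a function on ℝ⁴. -/
noncomputable def pd (μ : Fin 4) (f : (Fin 4 → ℝ) → ℝ) : (Fin 4 → ℝ) → ℝ :=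
  fun x => fderiv ℝ f x (Pi.single μ 1)

/-- Minkowski metric η = diag(1,−1,−1,−1) (its own inverse). -/
def η (μ ν : Fin 4) : ℝ := if μ = ν then (if μ = 0 then 1 else -1) else 0

/-- d'Alembertian □ = η^{μν} ∂_μ ∂_ν = ∂₀² − ∂₁² − ∂₂² − ∂₃². -/
noncomputable def box (f : (Fin 4 → ℝ) → ℝ) : (Fin 4 → ℝ) → ℝ :=
  fun x => ∑ μ : Fin 4, ∑ ν : Fin 4, η μ ν * pd μ (pd ν f) x

theorem ContDiff.pd_aux {f : (Fin 4 → ℝ) → ℝ} {n m : ℕ∞} (hf : ContDiff ℝ n f)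
    (h : m + 1 ≤ n) (μ : Fin 4) : ContDiff ℝ m (pd μ f) := by
  have hh : ContDiff ℝ m (fderiv ℝ f) := hf.fderiv_right (by exact_mod_cast h)
  exact (ContinuousLinearMap.apply ℝ ℝ (Pi.single μ 1)).contDiff.comp hh

theorem pd_comm {f : (Fin 4 → ℝ) → ℝ} (hf : ContDiff ℝ 2 f) (μ ν : Fin 4) (x : Fin 4 → ℝ) :
    pd μ (pd ν f) x = pd ν (pd μ f) x := by
  have hd : DifferentiableAt ℝ (fderiv ℝ f) x :=
    ((hf.fderiv_right (m := 1) (by norm_num)).differentiable one_ne_zero).differentiableAt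
  have hsymm : IsSymmSndFDerivAt ℝ f x := hf.contDiffAt.isSymmSndFDerivAt (by norm_num)
  have key : ∀ (ρ : Fin 4) (v : Fin 4 → ℝ), pd ρ (fun y => fderiv ℝ f y v) x
      = fderiv ℝ (fderiv ℝ f) x (Pi.single ρ 1) v := by
    intro ρ v
    simp only [pd]
    rw [fderiv_clm_apply hd (differentiableAt_const v)]
    simp
  rw [show pd ν f = fun y => fderiv ℝ f y (Pi.single ν 1) from rfl,
      show pd μ f = fun y => fderiv ℝ f y (Pi.single μ 1) from rfl,
      key μ _, key ν _]
  exact hsymm _ _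

theorem pd_comm' {f : (Fin 4 → ℝ) → ℝ} (hf : ContDiff ℝ 2 f) (μ ν : Fin 4) :
    pd μ (pd ν f) = pd ν (pd μ f) :=
  funext (pd_comm hf μ ν)

theorem pd_add {f g : (Fin 4 → ℝ) → ℝ} {x : Fin 4 → ℝ} (μ : Fin 4)
    (hf : DifferentiableAt ℝ f x) (hg : DifferentiableAt ℝ g x) :
    pd μ (fun y => f y + g y) x = pd μ f x + pd μ g x := by
  simp [pd, fderiv_fun_add hf hg]

theorem pd_sub {f g : (Fin 4 → ℝ) → ℝ} {x : Fin 4 → ℝ} (μ : Fin 4)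
    (hf : DifferentiableAt ℝ f x) (hg : DifferentiableAt ℝ g x) :
    pd μ (fun y => f y - g y) x = pd μ f x - pd μ g x := by
  simp [pd, fderiv_fun_sub hf hg]

theorem pd_mul {f g : (Fin 4 → ℝ) → ℝ} {x : Fin 4 → ℝ} (μ : Fin 4)
    (hf : DifferentiableAt ℝ f x) (hg : DifferentiableAt ℝ g x) :
    pd μ (fun y => f y * g y) x = pd μ f x * g x + f x * pd μ g x := by
  simp [pd, fderiv_fun_mul hf hg]; ring

theorem pd_const (μ : Fin 4) (c : ℝ) (x : Fin 4 → ℝ) : pd μ (fun _ => c) x = 0 := by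
  simp [pd]

theorem pd_neg {f : (Fin 4 → ℝ) → ℝ} {x : Fin 4 → ℝ} (μ : Fin 4) :
    pd μ (fun y => -f y) x = -pd μ f x := by
  simp [pd, fderiv_neg]

theorem pd_const_mul {f : (Fin 4 → ℝ) → ℝ} {x : Fin 4 → ℝ} (μ : Fin 4) (c : ℝ)
    (hf : DifferentiableAt ℝ f x) :
    pd μ (fun y => c * f y) x = c * pd μ f x := by
  simp [pd, fderiv_const_mul hf]

set_option maxHeartbeats 10000000 in
/-- for a smooth vector field A with (□ + m²)A_μ = 0, m > 0,
F_{μν} = ∂_μ A_ν − ∂_ν A_μ, A^phys_μ = A_μ + (1/m²)∂_μ ∂^ν A_ν, the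
energy-momentum tensor
𝒯_{μν} = F_{μρ}F_ν{}^ρ − (1/4)η_{μν}F_{ρσ}F^{ρσ}
          − m² A^phys_μ A^phys_ν + (m²/2) η_{μν} A^{phys,ρ} A^phys_ρ
is conserved: ∂^ν 𝒯_{μν} = 0. -/
theorem proca_energy_momentum_conserved
    (m : ℝ) (hm : 0 < m)
    (A : Fin 4 → (Fin 4 → ℝ) → ℝ)
    (hA : ∀ μ, ContDiff ℝ 4 (A μ))
    (hKG : ∀ μ x, box (A μ) x + m ^ 2 * A μ x = 0)
    (F : Fin 4 → Fin 4 → (Fin 4 → ℝ) → ℝ)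
    (hF : ∀ μ ν, F μ ν = fun x => pd μ (A ν) x - pd ν (A μ) x)
    (Aphys : Fin 4 → (Fin 4 → ℝ) → ℝ)
    (hAphys : ∀ μ, Aphys μ = fun x => A μ x
      + (1 / m ^ 2) * pd μ (fun y => ∑ α : Fin 4, ∑ β : Fin 4, η α β * pd β (A α) y) x)
    (𝒯 : Fin 4 → Fin 4 → (Fin 4 → ℝ) → ℝ)
    (h𝒯 : ∀ μ ν, 𝒯 μ ν = fun x =>
      (∑ ρ : Fin 4, ∑ σ : Fin 4, η ρ σ * F μ ρ x * F ν σ x)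
      - (1/4) * η μ ν * (∑ ρ : Fin 4, ∑ σ : Fin 4, ∑ α : Fin 4, ∑ β : Fin 4,
          η ρ α * η σ β * F α β x * F ρ σ x)
      - m ^ 2 * Aphys μ x * Aphys ν x
      + (m ^ 2 / 2) * η μ ν *
          (∑ ρ : Fin 4, ∑ σ : Fin 4, η ρ σ * Aphys ρ x * Aphys σ x)) :
    ∀ μ x, ∑ ν : Fin 4, ∑ α : Fin 4, η ν α * pd α (𝒯 μ ν) x = 0 := by
  intro μ x
  have hm2 : m ^ 2 ≠ 0 := pow_ne_zero 2 (ne_of_gt hm)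
  -- smoothness ladder
  have c3 : ∀ i j, ContDiff ℝ 3 (pd j (A i)) := fun i j => (hA i).pd_aux (by norm_num) j
  have c2 : ∀ i j k, ContDiff ℝ 2 (pd k (pd j (A i))) :=
    fun i j k => (c3 i j).pd_aux (by norm_num) k
  have c1 : ∀ i j k l, ContDiff ℝ 1 (pd l (pd k (pd j (A i)))) :=
    fun i j k l => (c2 i j k).pd_aux (by norm_num) l
  have hd0 : ∀ i, Differentiable ℝ (A i) := fun i => (hA i).differentiable (by norm_num)
  have hd1 : ∀ i j, Differentiable ℝ (pd j (A i)) :=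
    fun i j => (c3 i j).differentiable (by norm_num)
  have hd2 : ∀ i j k, Differentiable ℝ (pd k (pd j (A i))) :=
    fun i j k => (c2 i j k).differentiable (by norm_num)
  have hd3 : ∀ i j k l, Differentiable ℝ (pd l (pd k (pd j (A i)))) :=
    fun i j k l => (c1 i j k l).differentiable (by norm_num)
  -- second-derivative swaps (function level), sorted: smaller index outside
  have w10 : ∀ i, pd 1 (pd 0 (A i)) = pd 0 (pd 1 (A i)) :=
    fun i => pd_comm' ((hA i).of_le (by norm_num)) 1 0
  have w20 : ∀ i, pd 2 (pd 0 (A i)) = pd 0 (pd 2 (A i)) :=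
    fun i => pd_comm' ((hA i).of_le (by norm_num)) 2 0
  have w30 : ∀ i, pd 3 (pd 0 (A i)) = pd 0 (pd 3 (A i)) :=
    fun i => pd_comm' ((hA i).of_le (by norm_num)) 3 0
  have w21 : ∀ i, pd 2 (pd 1 (A i)) = pd 1 (pd 2 (A i)) :=
    fun i => pd_comm' ((hA i).of_le (by norm_num)) 2 1
  have w31 : ∀ i, pd 3 (pd 1 (A i)) = pd 1 (pd 3 (A i)) :=
    fun i => pd_comm' ((hA i).of_le (by norm_num)) 3 1
  have w32 : ∀ i, pd 3 (pd 2 (A i)) = pd 2 (pd 3 (A i)) :=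
    fun i => pd_comm' ((hA i).of_le (by norm_num)) 3 2
  -- third-derivative outer swaps
  have u10 : ∀ c i, pd 1 (pd 0 (pd c (A i))) = pd 0 (pd 1 (pd c (A i))) :=
    fun c i => pd_comm' ((c3 i c).of_le (by norm_num)) 1 0
  have u20 : ∀ c i, pd 2 (pd 0 (pd c (A i))) = pd 0 (pd 2 (pd c (A i))) :=
    fun c i => pd_comm' ((c3 i c).of_le (by norm_num)) 2 0
  have u30 : ∀ c i, pd 3 (pd 0 (pd c (A i))) = pd 0 (pd 3 (pd c (A i))) :=
    fun c i => pd_comm' ((c3 i c).of_le (by norm_num)) 3 0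
  have u21 : ∀ c i, pd 2 (pd 1 (pd c (A i))) = pd 1 (pd 2 (pd c (A i))) :=
    fun c i => pd_comm' ((c3 i c).of_le (by norm_num)) 2 1
  have u31 : ∀ c i, pd 3 (pd 1 (pd c (A i))) = pd 1 (pd 3 (pd c (A i))) :=
    fun c i => pd_comm' ((c3 i c).of_le (by norm_num)) 3 1
  have u32 : ∀ c i, pd 3 (pd 2 (pd c (A i))) = pd 2 (pd 3 (pd c (A i))) :=
    fun c i => pd_comm' ((c3 i c).of_le (by norm_num)) 3 2
  -- Klein-Gordon rewrites (function level)
  have hKG2f : ∀ i, pd 0 (pd 0 (A i)) = fun y =>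
      pd 1 (pd 1 (A i)) y + pd 2 (pd 2 (A i)) y + pd 3 (pd 3 (A i)) y - m ^ 2 * A i y := by
    intro i; funext y
    have h := hKG i y
    simp [box, Fin.sum_univ_four, η] at h
    linarith
  have hKG3f : ∀ c i, pd 0 (pd 0 (pd c (A i))) = fun y =>
      pd 1 (pd 1 (pd c (A i))) y + pd 2 (pd 2 (pd c (A i))) y + pd 3 (pd 3 (pd c (A i))) y
        - m ^ 2 * pd c (A i) y := by
    intro c i; funext y
    have e1 : ∀ a : Fin 4, pd a (pd c (A i)) = pd c (pd a (A i)) :=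
      fun a => pd_comm' ((hA i).of_le (by norm_num)) a c
    have e2 : ∀ a : Fin 4, pd a (pd a (pd c (A i))) y = pd c (pd a (pd a (A i))) y := by
      intro a
      rw [e1 a, pd_comm ((c3 i a).of_le (by norm_num)) a c]
    rw [e2 0, e2 1, e2 2, e2 3, hKG2f i]
    rw [show (fun y => pd 1 (pd 1 (A i)) y + pd 2 (pd 2 (A i)) y + pd 3 (pd 3 (A i)) y
        - m ^ 2 * A i y)
      = (fun y => (pd 1 (pd 1 (A i)) y + pd 2 (pd 2 (A i)) y + pd 3 (pd 3 (A i)) y)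
        - m ^ 2 * A i y) from rfl]
    rw [pd_sub c (by fun_prop) (by fun_prop), pd_add c (by fun_prop) (by fun_prop),
        pd_add c (by fun_prop) (by fun_prop), pd_const_mul c _ (by fun_prop)]
  fin_cases μ <;>
  · simp only [h𝒯, hF, hAphys]
    simp [Fin.sum_univ_four, η]
    simp (disch := fun_prop) only [pd_add, pd_sub, pd_mul, pd_const_mul, pd_const, pd_neg]
    simp (disch := fun_prop) only [hKG2f, hKG3f, pd_add, pd_sub, pd_const_mul, pd_const, pd_neg,
      w10, w20, w30, w21, w31, w32, u10, u20, u30, u21, u31, u32]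
    field_simp
    ring
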